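/- Let $v \in H^1(B_{r_0})$ where $B_\rho$ denote concentric disks in $\mathbb{R}^2$, $r_0 \leq 1/2$. If $\|\nabla v\|_{L^2}^2 \leq C_1 K^2$ and for all $\rho \in [r, \sqrt{r}]$ (with $r \leq r_0^2$) one has $\mathrm{osc}_{\partial B_\rho} v \geq \mathrm{osc}_{B_r} v - C_2 K \rho^2$, and additionally $C_1 K^2 \geq \int_r^{\sqrt r} \rho^{-1} (\mathrm{osc}_{\partial B_\rho} v)^2\, d\rho$, then $\mathrm{osc}_{B_r} v \leq \frac{C K}{\sqrt{\log(1/r)}}$ for a constant $C$ depending only on $C_1, C_2$. -/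

import Mathlib

open MeasureTheory Pointwise

noncomputable abbrev R2 := EuclideanSpace ℝ (Fin 2)

/-- The oscillation of a function over a set. -/
noncomputable def osc (v : R2 → ℝ) (K : Set R2) : ℝ := sSup (v '' K) - sInf (v '' K)

lemma osc_sphere_continuousOn (v : R2 → ℝ) (hv : Continuous v) :
    ContinuousOn (fun ρ : ℝ => osc v (Metric.sphere (0 : R2) ρ)) (Set.Ioi (0:ℝ)) := by
  have hK : IsCompact (Metric.sphere (0 : R2) 1) := isCompact_sphere _ _
  have hf : Continuous (Function.uncurry fun (ρ : ℝ) (p : R2) => v (ρ • p)) :=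
    hv.comp (continuous_fst.smul continuous_snd)
  have h1 : Continuous fun ρ : ℝ => sSup ((fun p => v (ρ • p)) '' Metric.sphere (0:R2) 1) :=
    hK.continuous_sSup hf
  have h2 : Continuous fun ρ : ℝ => sInf ((fun p => v (ρ • p)) '' Metric.sphere (0:R2) 1) :=
    hK.continuous_sInf hf
  have heq : ∀ ρ ∈ Set.Ioi (0:ℝ),
      v '' Metric.sphere (0:R2) ρ = (fun p => v (ρ • p)) '' Metric.sphere (0:R2) 1 := by
    intro ρ hρ
    have hs : Metric.sphere (0:R2) ρ = ρ • Metric.sphere (0:R2) 1 := by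
      rw [smul_sphere' (ne_of_gt (Set.mem_Ioi.mp hρ)), smul_zero, Real.norm_of_nonneg
        (le_of_lt (Set.mem_Ioi.mp hρ)), mul_one]
    rw [hs, ← Set.image_smul, Set.image_image]
  exact ((h1.sub h2).continuousOn).congr fun ρ hρ => by simp only [osc, heq ρ hρ, Pi.sub_apply]

/-- if `v ∈ H¹(B_{r₀})` satisfies `‖∇v‖_{L²}² ≤ C₁K²`,
`osc_{∂B_ρ} v ≥ osc_{B_r} v - C₂ K ρ²` for all `ρ ∈ [r,√r]` (where `r ≤ r₀² ≤ 1/4`), and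
`C₁K² ≥ ∫_r^{√r} ρ⁻¹ (osc_{∂B_ρ} v)² dρ`, then `osc_{B_r} v ≤ C K/√(log(1/r))`, with `C`
depending only on `C₁, C₂`. -/
theorem stmt11 (C₁ C₂ : ℝ) (hC₁ : 0 ≤ C₁) (hC₂ : 0 ≤ C₂) :
    ∃ C : ℝ, 0 < C ∧
    ∀ (v : R2 → ℝ) (r₀ r K : ℝ),
      0 < r₀ → r₀ ≤ 1 / 2 → 0 < r → r ≤ r₀ ^ 2 → 0 ≤ K →
      Differentiable ℝ v →
      (∫ x in Metric.ball (0 : R2) r₀, ‖fderiv ℝ v x‖ ^ 2) ≤ C₁ * K ^ 2 →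
      (∀ ρ ∈ Set.Icc r (Real.sqrt r),
        osc v (Metric.sphere (0 : R2) ρ) ≥ osc v (Metric.ball (0 : R2) r) - C₂ * K * ρ ^ 2) →
      (∫ ρ in Set.Icc r (Real.sqrt r), ρ⁻¹ * (osc v (Metric.sphere (0 : R2) ρ)) ^ 2)
        ≤ C₁ * K ^ 2 →
      osc v (Metric.ball (0 : R2) r) ≤ C * K / Real.sqrt (Real.log (1 / r)) := by
  refine ⟨Real.sqrt (8 * C₁) + 2 * C₂ + 1, by positivity, ?_⟩
  intro v r₀ r K hr₀ hr₀le hr hrle hK hv hgrad hosc hint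
  set C := Real.sqrt (8 * C₁) + 2 * C₂ + 1 with hC
  have hsqrt8 : 0 ≤ Real.sqrt (8 * C₁) := Real.sqrt_nonneg _
  have hr1 : r ≤ 1/4 := le_trans hrle (by nlinarith)
  have hrlt1 : r < 1 := by linarith
  have hL : 0 < Real.log (1/r) := Real.log_pos (by rw [lt_div_iff₀ hr]; linarith)
  set L := Real.log (1/r) with hLdef
  have hsL : 0 < Real.sqrt L := Real.sqrt_pos.mpr hL
  set ω := osc v (Metric.ball (0:R2) r) with hω
  rcases le_or_gt ω 0 with hω0 | hω0
  · exact le_trans hω0 (by positivity)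
  have hsr_pos : 0 < Real.sqrt r := Real.sqrt_pos.mpr hr
  have hsr_sq : Real.sqrt r * Real.sqrt r = r := Real.mul_self_sqrt hr.le
  have hsr_le : Real.sqrt r ≤ 1/2 := by
    rw [show (1/2:ℝ) = Real.sqrt ((1/2)^2) from (Real.sqrt_sq (by norm_num)).symm]
    exact Real.sqrt_le_sqrt (by norm_num; linarith)
  have hrsr : r ≤ Real.sqrt r := by nlinarith
  -- r * √L ≤ 1
  have hrsL : r * Real.sqrt L ≤ 1 := by
    have h1 : L ≤ 1/r := le_trans (Real.log_le_sub_one_of_pos (by positivity)) (by linarith)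
    have h2 : Real.sqrt L ≤ Real.sqrt (1/r) := Real.sqrt_le_sqrt h1
    have h3 : Real.sqrt (1/r) = 1 / Real.sqrt r := by
      rw [one_div, Real.sqrt_inv, one_div]
    have h4 : r * Real.sqrt L ≤ r * (1 / Real.sqrt r) := by
      apply mul_le_mul_of_nonneg_left _ hr.le
      rw [← h3]; exact h2
    have h5 : r * (1 / Real.sqrt r) = Real.sqrt r := by
      field_simp
      rw [Real.sq_sqrt hr.le]
    nlinarith
  rcases le_or_gt ω (2 * C₂ * K * r) with hcase | hcase
  · -- small case
    rw [le_div_iff₀ hsL]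
    calc ω * Real.sqrt L ≤ (2*C₂*K*r) * Real.sqrt L :=
          mul_le_mul_of_nonneg_right hcase hsL.le
      _ = (2*C₂*K) * (r * Real.sqrt L) := by ring
      _ ≤ (2*C₂*K) * 1 := mul_le_mul_of_nonneg_left hrsL (by positivity)
      _ = (2*C₂) * K := by ring
      _ ≤ C * K := by
          apply mul_le_mul_of_nonneg_right _ hK
          rw [hC]; linarith
  · -- main case : osc on spheres ≥ ω/2
    have h2 : ∀ ρ ∈ Set.Icc r (Real.sqrt r), ω/2 ≤ osc v (Metric.sphere (0:R2) ρ) := by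
      intro ρ hρ
      obtain ⟨hρ1, hρ2⟩ := hρ
      have hρpos : 0 < ρ := lt_of_lt_of_le hr hρ1
      have hρsq : ρ^2 ≤ r := by nlinarith
      have hh := hosc ρ ⟨hρ1, hρ2⟩
      have : C₂ * K * ρ^2 ≤ C₂ * K * r :=
        mul_le_mul_of_nonneg_left hρsq (by positivity)
      linarith
    have hsub : Set.Icc r (Real.sqrt r) ⊆ Set.Ioi (0:ℝ) := fun x hx =>
      Set.mem_Ioi.mpr (lt_of_lt_of_le hr hx.1)
    have hcont : ContinuousOn (fun ρ : ℝ => ρ⁻¹ * (osc v (Metric.sphere (0:R2) ρ))^2)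
        (Set.Icc r (Real.sqrt r)) := by
      apply ContinuousOn.mul
      · exact ContinuousOn.inv₀ continuousOn_id fun x hx => ne_of_gt (hsub hx)
      · exact ((osc_sphere_continuousOn v hv.continuous).mono hsub).pow 2
    have hcont2 : ContinuousOn (fun ρ : ℝ => (ω/2)^2 * ρ⁻¹) (Set.Icc r (Real.sqrt r)) :=
      ContinuousOn.mul continuousOn_const
        (ContinuousOn.inv₀ continuousOn_id fun x hx => ne_of_gt (hsub hx))
    have hInt1 : IntegrableOn (fun ρ : ℝ => ρ⁻¹ * (osc v (Metric.sphere (0:R2) ρ))^2)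
        (Set.Icc r (Real.sqrt r)) := hcont.integrableOn_compact isCompact_Icc
    have hInt2 : IntegrableOn (fun ρ : ℝ => (ω/2)^2 * ρ⁻¹)
        (Set.Icc r (Real.sqrt r)) := hcont2.integrableOn_compact isCompact_Icc
    have hmono : (∫ ρ in Set.Icc r (Real.sqrt r), (ω/2)^2 * ρ⁻¹)
        ≤ ∫ ρ in Set.Icc r (Real.sqrt r), ρ⁻¹ * (osc v (Metric.sphere (0:R2) ρ))^2 := by
      apply setIntegral_mono_on hInt2 hInt1 measurableSet_Icc
      intro ρ hρ
      have hρpos : 0 < ρ := hsub hρ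
      have hsq : (ω/2)^2 ≤ (osc v (Metric.sphere (0:R2) ρ))^2 :=
        pow_le_pow_left₀ (by positivity) (h2 ρ hρ) 2
      rw [mul_comm ((ω/2)^2)]
      exact mul_le_mul_of_nonneg_left hsq (by positivity)
    have hIcalc : (∫ ρ in Set.Icc r (Real.sqrt r), (ω/2)^2 * ρ⁻¹) = (ω/2)^2 * (L/2) := by
      rw [MeasureTheory.integral_const_mul]
      congr 1
      rw [MeasureTheory.integral_Icc_eq_integral_Ioc, ← intervalIntegral.integral_of_le hrsr,
        integral_inv_of_pos hr hsr_pos]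
      have h6 : Real.sqrt r / r = (Real.sqrt r)⁻¹ := by
        rw [div_eq_iff (ne_of_gt hr), inv_mul_eq_div, eq_div_iff (ne_of_gt hsr_pos)]
        exact hsr_sq
      rw [h6, Real.log_inv, Real.log_sqrt hr.le, hLdef, one_div, Real.log_inv]
      ring
    have hkey : ω^2 * L ≤ 8 * C₁ * K^2 := by
      have h7 := le_trans hmono hint
      rw [hIcalc, show (ω/2)^2 * (L/2) = ω^2 * L / 8 by ring] at h7
      linarith
    have homsL : ω * Real.sqrt L ≤ Real.sqrt (8*C₁) * K := by
      have e1 : (ω * Real.sqrt L)^2 = ω^2 * L := by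
        rw [mul_pow, Real.sq_sqrt hL.le]
      have e2 : (Real.sqrt (8*C₁) * K)^2 = 8*C₁*K^2 := by
        rw [mul_pow, Real.sq_sqrt (by positivity)]
      have h1 : (ω * Real.sqrt L)^2 ≤ (Real.sqrt (8*C₁) * K)^2 := by
        rw [e1, e2]; exact hkey
      have := Real.sqrt_le_sqrt h1
      rwa [Real.sqrt_sq (by positivity), Real.sqrt_sq (by positivity)] at this
    rw [le_div_iff₀ hsL]
    calc ω * Real.sqrt L ≤ Real.sqrt (8*C₁) * K := homsL
      _ ≤ C * K := by
          apply mul_le_mul_of_nonneg_right _ hK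
          rw [hC]; linarith
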